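/- The vectors u₁, u₂, u₃, u₄ are linearly independent over K; in particular they form a basis of K⁴. (This is the computation underlying Corollary 4.5: H¹(A, Ω¹_A) of the superspecial abelian surface is generated by the Chern classes of the algebraic cycles E₁, E₂, Δ, Δ_{(1+α)/2}.) -/

import Mathlib

/-- Let `p` be an odd prime, `K` a field of characteristic `p`, `q` an integer
not divisible by `p`, and `s ∈ K` with `s² = -q`.  The vectors
`u₁ = (0,0,0,1)`, `u₂ = (1,0,0,0)`, `u₃ = (1,1,1,1)`,
`u₄ = (1, (1+s)/2, (1-s)/2, (1+q)/4)` in `K⁴` are linearly independent over `K`;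
in particular they form a basis of `K⁴`. -/
theorem chernClasses_linearIndependent (p : ℕ) (hp : p.Prime) (hpodd : Odd p)
    (K : Type*) [Field K] [CharP K p] (q : ℤ) (hq : ¬ (p : ℤ) ∣ q)
    (s : K) (hs : s ^ 2 = -(q : K)) :
    let u : Fin 4 → (Fin 4 → K) :=
      ![![0, 0, 0, 1], ![1, 0, 0, 0], ![1, 1, 1, 1],
        ![1, (1 + s) / 2, (1 - s) / 2, (1 + (q : K)) / 4]]
    LinearIndependent K u ∧ Submodule.span K (Set.range u) = ⊤ := by
  intro u
  have hq0 : (q : K) ≠ 0 := by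
    rwa [Ne, CharP.intCast_eq_zero_iff K p]
  have hs0 : s ≠ 0 := by
    intro h
    rw [h] at hs
    simp at hs
    exact hq0 hs
  have hM : IsUnit (Matrix.of u) := by
    rw [Matrix.isUnit_iff_isUnit_det]
    have hdet : (Matrix.of u).det = s := by
      simp [u, Matrix.det_succ_row_zero, Fin.sum_univ_succ, Fin.castSucc, Fin.castAdd, Fin.castLE,
        show ((3 : Fin 4).succAbove (2 : Fin 3)) = 2 from rfl]
      have h2 : (2:K) ≠ 0 :=
        Ring.two_ne_zero (by rw [ringChar.eq K p]; rintro rfl; simp [Nat.odd_iff] at hpodd)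
      field_simp
      ring
    rw [hdet]
    exact hs0.isUnit
  have hli : LinearIndependent K u :=
    Matrix.linearIndependent_rows_iff_isUnit.2 hM
  refine ⟨hli, hli.span_eq_top_of_card_eq_finrank ?_⟩
  simp [Module.finrank_fintype_fun_eq_card]
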